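/- There exist a constant C > 1 and μ₀ > 0 (depending only on α, L, ξ) such that for every μ ≥ μ₀, | ∫_{α²}^{T_{μ,L}} ∫_ℝ max(μ − (x+ξ)² e^{2t}/L², 0)^{1/2} dx dt − Σ_{ℓ ∈ ℤ} w_ℓ(μ) | ≤ C·√μ·ln μ. -/

import Mathlib

set_option maxHeartbeats 1000000

open Real MeasureTheory


lemma integral_sqrt_sub_sq (r : ℝ) (hr : 0 < r) :
    ∫ y in (-r)..r, Real.sqrt (r^2 - y^2) = r^2 * (π/2) := by
  have h := intervalIntegral.smul_integral_comp_mul_left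
    (fun y => Real.sqrt (r^2 - y^2)) (a := -1) (b := 1) r
  simp only [smul_eq_mul, mul_neg, mul_one] at h
  rw [← h]
  have : ∀ x : ℝ, Real.sqrt (r^2 - (r*x)^2) = r * Real.sqrt (1 - x^2) := by
    intro x
    rw [show r^2 - (r*x)^2 = r^2 * (1 - x^2) by ring, Real.sqrt_mul (by positivity),
      Real.sqrt_sq hr.le]
  simp only [this]
  rw [intervalIntegral.integral_const_mul, integral_sqrt_one_sub_sq]
  ring

lemma integral_max_sqrt (μ c ξ : ℝ) (hμ : 0 < μ) (hc : 0 < c) :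
    ∫ x : ℝ, Real.sqrt (max (μ - (x + ξ)^2 * c) 0) = π/2 * μ / Real.sqrt c := by
  set r := Real.sqrt (μ/c) with hrdef
  have hr : 0 < r := Real.sqrt_pos.2 (by positivity)
  have hr2 : r^2 = μ/c := Real.sq_sqrt (by positivity)
  have hcr2 : c * r^2 = μ := by rw [hr2]; field_simp
  set g : ℝ → ℝ := fun x => Real.sqrt (max (μ - (x + ξ)^2 * c) 0) with hgdef
  have hout : ∀ x : ℝ, x ∉ Set.Icc (-ξ - r) (-ξ + r) → g x = 0 := by
    intro x hx
    have h1 : r < |x + ξ| := by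
      rcases abs_cases (x + ξ) with ⟨h, h'⟩ | ⟨h, h'⟩ <;>
        simp only [Set.mem_Icc, not_and_or, not_le] at hx <;> rcases hx with h2 | h2 <;>
        [skip; rw[h]; rw[h]; skip] <;> linarith
    have h2 : μ - (x+ξ)^2 * c ≤ 0 := by
      have : r^2 < (x+ξ)^2 := by
        rw [← sq_abs (x+ξ)]
        exact pow_lt_pow_left₀ h1 hr.le (by norm_num)
      nlinarith
    simp [hgdef, max_eq_right h2]
  have h1 : (∫ x : ℝ, g x) = ∫ x in Set.Icc (-ξ - r) (-ξ + r), g x := by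
    rw [← MeasureTheory.integral_indicator measurableSet_Icc]
    congr 1
    ext x
    by_cases hx : x ∈ Set.Icc (-ξ - r) (-ξ + r)
    · rw [Set.indicator_of_mem hx]
    · rw [Set.indicator_of_notMem hx, hout x hx]
  have hle : -ξ - r ≤ -ξ + r := by linarith
  have h2 : (∫ x in Set.Icc (-ξ - r) (-ξ + r), g x) = ∫ x in (-ξ - r)..(-ξ + r), g x := by
    rw [MeasureTheory.integral_Icc_eq_integral_Ioc, intervalIntegral.integral_of_le hle]
  have h3 : (∫ x in (-ξ - r)..(-ξ + r), g x)
      = ∫ x in (-ξ - r)..(-ξ + r), Real.sqrt (μ - (x + ξ)^2 * c) := by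
    apply intervalIntegral.integral_congr
    intro x hx
    rw [Set.uIcc_of_le hle] at hx
    have hax : |x + ξ| ≤ r := by
      rw [abs_le]; constructor <;> [linarith [hx.1]; linarith [hx.2]]
    have : (x+ξ)^2 ≤ r^2 := by rw [← sq_abs (x+ξ)]; exact pow_le_pow_left₀ (abs_nonneg _) hax 2
    have hnn : 0 ≤ μ - (x+ξ)^2 * c := by nlinarith
    simp [hgdef, max_eq_left hnn]
  have h4 : (∫ x in (-ξ - r)..(-ξ + r), Real.sqrt (μ - (x + ξ)^2 * c))
      = ∫ y in (-r)..r, Real.sqrt (μ - y^2 * c) := by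
    have := intervalIntegral.integral_comp_add_right
      (a := -ξ - r) (b := -ξ + r) (fun y => Real.sqrt (μ - y^2 * c)) ξ
    rw [this]
    congr 1 <;> ring
  have h5 : (∫ y in (-r)..r, Real.sqrt (μ - y^2 * c))
      = Real.sqrt c * ∫ y in (-r)..r, Real.sqrt (r^2 - y^2) := by
    rw [← intervalIntegral.integral_const_mul]
    apply intervalIntegral.integral_congr
    intro y _
    show Real.sqrt (μ - y^2*c) = Real.sqrt c * Real.sqrt (r^2 - y^2)
    rw [← Real.sqrt_mul hc.le, show c * (r^2 - y^2) = μ - y^2*c by rw [mul_sub, hcr2]; ring]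
  rw [h1, h2, h3, h4, h5, integral_sqrt_sub_sq r hr, hr2]
  have hsc : Real.sqrt c > 0 := Real.sqrt_pos.2 hc
  rw [show Real.sqrt c * (μ / c * (π/2)) = π/2 * μ * (Real.sqrt c / c) by ring]
  rw [show Real.sqrt c / c = 1 / Real.sqrt c by
    rw [eq_div_iff (ne_of_gt hsc), div_mul_eq_mul_div, Real.mul_self_sqrt hc.le, div_self (ne_of_gt hc)]]
  ring


lemma sum_Ico_int (f : ℤ → ℝ) (a : ℤ) (n : ℕ) :
    ∑ ℓ ∈ Finset.Ico a (a + n), f ℓ = ∑ i ∈ Finset.range n, f (a + i) := by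
  induction n with
  | zero => simp
  | succ n ih =>
    have h : Finset.Ico a (a + ((n:ℤ)+1)) = insert (a + n) (Finset.Ico a (a + n)) := by
      ext x; simp only [Finset.mem_Ico, Finset.mem_insert]; omega
    push_cast
    rw [h, Finset.sum_insert (by simp), Finset.sum_range_succ, ih]
    push_cast
    ring

lemma core_cmp (g : ℝ → ℝ) (M : ℝ) (hM : 0 ≤ M) (hg0 : ∀ x, 0 ≤ g x) (hgM : ∀ x, g x ≤ M)
    (hcont : Continuous g) (ξ : ℝ) (hξ0 : 0 < ξ) (hξ1 : ξ < 1)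
    (hmono : MonotoneOn g (Set.Iic (-ξ))) (hanti : AntitoneOn g (Set.Ici (-ξ)))
    (K : ℤ) (hK : 2 ≤ K) (hsupp : ∀ x : ℝ, (K:ℝ) - 1 ≤ |x| → g x = 0) :
    |(∫ x : ℝ, g x) - ∑ ℓ ∈ Finset.Icc (-K) K, g ℓ| ≤ 2 * M := by
  have hint : ∀ a b : ℝ, IntervalIntegrable g volume a b := fun a b => hcont.intervalIntegrable a b
  set k : ℕ := K.toNat with hkdef
  have hkK : (k : ℤ) = K := Int.toNat_of_nonneg (by omega)
  have hk2 : 2 ≤ k := by omega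
  have hkR : (k : ℝ) = (K : ℝ) := by rw [← hkK]; push_cast; ring
  -- whole-line integral equals interval integral
  have hwhole : (∫ x : ℝ, g x) = ∫ x in (-(K:ℝ) - 1)..((K:ℝ) + 1), g x := by
    have h1 : (∫ x : ℝ, g x) = ∫ x in Set.Icc (-(K:ℝ) - 1) ((K:ℝ) + 1), g x := by
      rw [← MeasureTheory.integral_indicator measurableSet_Icc]
      congr 1
      ext x
      by_cases hx : x ∈ Set.Icc (-(K:ℝ) - 1) ((K:ℝ) + 1)
      · rw [Set.indicator_of_mem hx]
      · rw [Set.indicator_of_notMem hx]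
        apply hsupp
        simp only [Set.mem_Icc, not_and_or, not_le] at hx
        have hK1 : (1:ℝ) ≤ (K:ℝ) := by exact_mod_cast (by omega : (1:ℤ) ≤ K)
        rcases hx with h | h
        · rw [abs_of_nonpos (by linarith)]; linarith
        · rw [abs_of_nonneg (by linarith)]; linarith
    rw [h1, MeasureTheory.integral_Icc_eq_integral_Ioc,
      intervalIntegral.integral_of_le (by push_cast; linarith [hkR ▸ (by exact_mod_cast hk2 : (2:ℝ) ≤ (k:ℝ))])]
  -- interval additivity pieces
  have _hadd : ∀ a b c : ℝ, (∫ x in a..b, g x) + ∫ x in b..c, g x = ∫ x in a..c, g x :=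
    fun a b c => intervalIntegral.integral_add_adjacent_intervals (hint a b) (hint b c)
  have hnn : ∀ a b : ℝ, a ≤ b → 0 ≤ ∫ x in a..b, g x :=
    fun a b hab => intervalIntegral.integral_nonneg hab (fun x _ => hg0 x)
  have hMbd : ∀ a : ℝ, (∫ x in a..(a+1), g x) ≤ M := by
    intro a
    calc (∫ x in a..(a+1), g x) ≤ ∫ _x in a..(a+1), M :=
          intervalIntegral.integral_mono_on (by linarith) (hint a (a+1))
            intervalIntegrable_const (fun x _ => hgM x)
      _ = M := by simp
  -- split the sum
  have hsplit : ∑ ℓ ∈ Finset.Icc (-K) K, g ℓ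
      = (∑ i ∈ Finset.range k, g (-(K:ℝ) + (i:ℕ))) + ∑ i ∈ Finset.range (k+1), g ((0:ℝ) + (i:ℕ)) := by
    have e1 : Finset.Icc (-K) K = Finset.Ico (-K) (K+1) := by
      ext x; simp only [Finset.mem_Icc, Finset.mem_Ico]; omega
    rw [e1, ← Finset.Ico_union_Ico_eq_Ico (by omega : -K ≤ (0:ℤ)) (by omega : (0:ℤ) ≤ K+1),
      Finset.sum_union (Finset.Ico_disjoint_Ico_consecutive _ _ _)]
    congr 1
    · have := sum_Ico_int (fun ℓ : ℤ => g ℓ) (-K) k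
      rw [show -K + (k:ℤ) = 0 by omega] at this
      refine this.trans (Finset.sum_congr rfl fun i _ => ?_)
      congr 1; push_cast; ring
    · have := sum_Ico_int (fun ℓ : ℤ => g ℓ) 0 (k+1)
      rw [show (0:ℤ) + ((k:ℕ)+1 : ℕ) = K + 1 by push_cast; omega] at this
      refine this.trans (Finset.sum_congr rfl fun i _ => ?_)
      congr 1; push_cast; ring
  have ekm : ((k-1:ℕ):ℝ) = (K:ℝ) - 1 := by
    rw [Nat.cast_sub (by omega), hkR]; norm_num
  have ekR : ((k:ℕ):ℝ) = (K:ℝ) := hkR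
  have ekp : (((k:ℕ)+1:ℕ):ℝ) = (K:ℝ) + 1 := by push_cast [hkR]; ring
  have hK1 : (1:ℝ) ≤ (K:ℝ) := by exact_mod_cast (by omega : (1:ℤ) ≤ K)
  have hIic : Set.Icc (-(K:ℝ)-1) (-1:ℝ) ⊆ Set.Iic (-ξ) := fun x hx => le_trans hx.2 (by linarith)
  have hIci : Set.Icc (0:ℝ) ((K:ℝ)+1) ⊆ Set.Ici (-ξ) := fun x hx => le_trans (by linarith) hx.1
  -- upper bound for left block
  have hupL : (∑ i ∈ Finset.range k, g (-(K:ℝ) + (i:ℕ)))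
      ≤ (∫ x in (-(K:ℝ))..(-1:ℝ), g x) + M := by
    rw [show k = (k-1)+1 by omega, Finset.sum_range_succ]
    have h1 : (∑ i ∈ Finset.range (k-1), g (-(K:ℝ) + (i:ℕ)))
        ≤ ∫ x in (-(K:ℝ))..(-(K:ℝ) + ((k-1:ℕ):ℝ)), g x := by
      apply MonotoneOn.sum_le_integral
      apply hmono.mono
      intro x hx
      rw [ekm] at hx
      exact le_trans hx.2 (by linarith)
    rw [ekm] at h1
    rw [show -(K:ℝ) + ((K:ℝ)-1) = -1 by ring] at h1
    exact add_le_add h1 (hgM _)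
  -- upper bound for right block
  have hupR : (∑ i ∈ Finset.range (k+1), g ((0:ℝ) + (i:ℕ)))
      ≤ (∫ x in (0:ℝ)..(K:ℝ), g x) + M := by
    rw [Finset.sum_range_succ']
    have h1 : (∑ i ∈ Finset.range k, g ((0:ℝ) + ((i:ℕ)+1:ℕ)))
        ≤ ∫ x in (0:ℝ)..((0:ℝ) + ((k:ℕ):ℝ)), g x := by
      apply AntitoneOn.sum_le_integral
      apply hanti.mono
      intro x hx
      exact le_trans (by linarith) hx.1
    rw [ekR, zero_add] at h1
    refine le_trans (add_le_add ?_ (by simpa using hgM 0)) (add_le_add_left h1 M)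
    apply le_of_eq
    apply Finset.sum_congr rfl
    intro i _
    congr 1
    all_goals (push_cast; ring)
  -- lower bound for left block
  have hloL : (∫ x in (-(K:ℝ)-1)..(-1:ℝ), g x)
      ≤ ∑ i ∈ Finset.range k, g (-(K:ℝ) + (i:ℕ)) := by
    have h1 : (∫ x in (-(K:ℝ)-1)..((-(K:ℝ)-1) + ((k:ℕ):ℝ)), g x)
        ≤ ∑ i ∈ Finset.range k, g ((-(K:ℝ)-1) + ((i:ℕ)+1:ℕ)) := by
      apply MonotoneOn.integral_le_sum
      apply hmono.mono
      intro x hx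
      rw [ekR] at hx
      exact le_trans hx.2 (by linarith)
    rw [ekR, show (-(K:ℝ)-1) + (K:ℝ) = -1 by ring] at h1
    refine le_trans h1 (le_of_eq (Finset.sum_congr rfl fun i _ => ?_))
    congr 1
    all_goals (push_cast; ring)
  -- lower bound for right block
  have hloR : (∫ x in (0:ℝ)..((K:ℝ)+1), g x)
      ≤ ∑ i ∈ Finset.range (k+1), g ((0:ℝ) + (i:ℕ)) := by
    have h1 : (∫ x in (0:ℝ)..((0:ℝ) + (((k+1:ℕ)):ℝ)), g x)
        ≤ ∑ i ∈ Finset.range (k+1), g ((0:ℝ) + (i:ℕ)) := by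
      apply AntitoneOn.integral_le_sum
      apply hanti.mono
      intro x hx
      exact le_trans (by linarith) hx.1
    rw [ekp, zero_add] at h1
    exact h1
  -- interval splittings
  have e1 : (∫ x in (-(K:ℝ)-1)..(-(K:ℝ)), g x) + (∫ x in (-(K:ℝ))..(-1:ℝ), g x)
      = ∫ x in (-(K:ℝ)-1)..(-1:ℝ), g x := _hadd _ _ _
  have e2 : (∫ x in (-(K:ℝ)-1)..(-1:ℝ), g x) + (∫ x in (-1:ℝ)..(0:ℝ), g x)
      = ∫ x in (-(K:ℝ)-1)..(0:ℝ), g x := _hadd _ _ _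
  have e3 : (∫ x in (-(K:ℝ)-1)..(0:ℝ), g x) + (∫ x in (0:ℝ)..((K:ℝ)+1), g x)
      = ∫ x in (-(K:ℝ)-1)..((K:ℝ)+1), g x := _hadd _ _ _
  have e4 : (∫ x in (0:ℝ)..((K:ℝ)), g x) + (∫ x in ((K:ℝ))..((K:ℝ)+1), g x)
      = ∫ x in (0:ℝ)..((K:ℝ)+1), g x := _hadd _ _ _
  have n1 : 0 ≤ ∫ x in (-(K:ℝ)-1)..(-(K:ℝ)), g x := hnn _ _ (by linarith)
  have n2 : 0 ≤ ∫ x in (-1:ℝ)..(0:ℝ), g x := hnn _ _ (by linarith)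
  have n3 : 0 ≤ ∫ x in ((K:ℝ))..((K:ℝ)+1), g x := hnn _ _ (by linarith)
  have m2 : (∫ x in (-1:ℝ)..(0:ℝ), g x) ≤ M := by
    have := hMbd (-1:ℝ); rw [show (-1:ℝ)+1 = 0 by ring] at this; exact this
  rw [hwhole, hsplit, abs_le]
  constructor <;> linarith


lemma hF_eq (μ L ξ : ℝ) (hμ : 0 < μ) (hL : 0 < L) (t : ℝ) :
    (∫ x : ℝ, Real.sqrt (max (μ - (x + ξ)^2 * Real.exp (2*t) / L^2) 0))
      = π/2 * μ * L * Real.exp (-t) := by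
  have h1 : (∫ x : ℝ, Real.sqrt (max (μ - (x + ξ)^2 * Real.exp (2*t) / L^2) 0))
      = ∫ x : ℝ, Real.sqrt (max (μ - (x + ξ)^2 * (Real.exp (2*t) / L^2)) 0) := by
    simp only [mul_div_assoc]
  rw [h1, integral_max_sqrt μ _ ξ hμ (by positivity)]
  have h2 : Real.sqrt (Real.exp (2*t) / L^2) = Real.exp t / L := by
    rw [Real.sqrt_div (Real.exp_nonneg _), show (2:ℝ)*t = t + t by ring, Real.exp_add,
      Real.sqrt_mul_self (Real.exp_nonneg t), Real.sqrt_sq hL.le]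
  rw [h2, Real.exp_neg]
  have he : Real.exp t > 0 := Real.exp_pos t
  field_simp

lemma pointwise_bound (μ L ξ : ℝ) (hμ : 1 ≤ μ) (hL : 0 < L) (hξ0 : 0 < ξ) (hξ1 : ξ < 1)
    (t : ℝ) (ht : 0 ≤ t) :
    |π/2 * μ * L * Real.exp (-t)
      - ∑ ℓ ∈ Finset.Icc (-(⌈L * Real.sqrt μ⌉ + 2)) (⌈L * Real.sqrt μ⌉ + 2),
          Real.sqrt (max (μ - ((ℓ:ℝ) + ξ)^2 * Real.exp (2*t) / L^2) 0)|
      ≤ 2 * Real.sqrt μ := by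
  have hμ0 : (0:ℝ) < μ := by linarith
  set c : ℝ := Real.exp (2*t) / L^2 with hcdef
  have hc : 0 < c := by positivity
  have hexp1 : (1:ℝ) ≤ Real.exp (2*t) := by
    rw [← Real.exp_zero]; exact Real.exp_le_exp.2 (by linarith)
  set g : ℝ → ℝ := fun x => Real.sqrt (max (μ - (x + ξ)^2 * c) 0) with hgdef
  have hgoal : (∑ ℓ ∈ Finset.Icc (-(⌈L * Real.sqrt μ⌉ + 2)) (⌈L * Real.sqrt μ⌉ + 2),
      Real.sqrt (max (μ - ((ℓ:ℝ) + ξ)^2 * Real.exp (2*t) / L^2) 0))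
      = ∑ ℓ ∈ Finset.Icc (-(⌈L * Real.sqrt μ⌉ + 2)) (⌈L * Real.sqrt μ⌉ + 2), g ℓ := by
    refine Finset.sum_congr rfl fun ℓ _ => ?_
    simp only [hgdef, mul_div_assoc, hcdef]
  rw [hgoal, ← hF_eq μ L ξ hμ0 hL t]
  have hFg : (∫ x : ℝ, Real.sqrt (max (μ - (x + ξ)^2 * Real.exp (2*t) / L^2) 0))
      = ∫ x : ℝ, g x := by
    congr 1; ext x; simp only [hgdef, mul_div_assoc, hcdef]
  rw [hFg]
  set K : ℤ := ⌈L * Real.sqrt μ⌉ + 2 with hKdef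
  have hsqμ : 0 < Real.sqrt μ := Real.sqrt_pos.2 hμ0
  have hceil : L * Real.sqrt μ ≤ (⌈L * Real.sqrt μ⌉ : ℝ) := Int.le_ceil _
  have hceil0 : (0:ℤ) ≤ ⌈L * Real.sqrt μ⌉ := Int.ceil_nonneg (by positivity)
  apply core_cmp g (Real.sqrt μ) hsqμ.le
  · intro x; exact Real.sqrt_nonneg _
  · intro x
    apply Real.sqrt_le_sqrt
    exact max_le (by nlinarith [sq_nonneg (x+ξ)]) hμ0.le
  · fun_prop
  · exact hξ0
  · exact hξ1
  · intro x hx y hy hxy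
    apply Real.sqrt_le_sqrt
    apply max_le_max _ le_rfl
    apply sub_le_sub_left
    apply mul_le_mul_of_nonneg_right _ hc.le
    have hx' : x ≤ -ξ := hx
    have hy' : y ≤ -ξ := hy
    nlinarith [mul_nonneg (sub_nonneg.2 hxy) (by linarith : (0:ℝ) ≤ -x - y - 2*ξ)]
  · intro x hx y hy hxy
    apply Real.sqrt_le_sqrt
    apply max_le_max _ le_rfl
    apply sub_le_sub_left
    apply mul_le_mul_of_nonneg_right _ hc.le
    have hx' : -ξ ≤ x := hx
    have hy' : -ξ ≤ y := hy
    nlinarith [mul_nonneg (sub_nonneg.2 hxy) (by linarith : (0:ℝ) ≤ x + y + 2*ξ)]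
  · omega
  · intro x hx
    have hKR : (K:ℝ) - 1 = (⌈L * Real.sqrt μ⌉ : ℝ) + 1 := by push_cast [hKdef]; ring
    have h1 : L * Real.sqrt μ + 1 ≤ |x| := by rw [hKR] at hx; linarith
    have h2 : L * Real.sqrt μ ≤ |x + ξ| := by
      have := abs_sub_abs_le_abs_sub x (-ξ)
      rw [sub_neg_eq_add] at this
      have hxabs : |(-ξ)| ≤ 1 := by rw [abs_neg, abs_of_pos hξ0]; linarith
      linarith
    have h3 : L^2 * μ ≤ (x+ξ)^2 := by
      rw [← sq_abs (x+ξ)]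
      have hLs : 0 ≤ L * Real.sqrt μ := by positivity
      nlinarith [Real.sq_sqrt hμ0.le]
    have h4 : μ ≤ (x+ξ)^2 * c := by
      have hc1 : 1/L^2 ≤ c := by rw [hcdef]; gcongr
      have : L^2 * μ * (1/L^2) ≤ (x+ξ)^2 * c :=
        mul_le_mul h3 hc1 (by positivity) (sq_nonneg _)
      calc μ = L^2 * μ * (1/L^2) := by field_simp
        _ ≤ _ := this
    simp only [hgdef]
    rw [max_eq_right (by linarith), Real.sqrt_zero]

/-- Lemma 2.5 of the paper: there are `C > 1` and `μ₀ > 0` (depending only on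
`α, L, ξ`) such that for all `μ ≥ μ₀`,
`| ∫_{α²}^{T_{μ,L}} ∫_ℝ max(μ − (x+ξ)² e^{2t}/L², 0)^{1/2} dx dt − Σ_{ℓ∈ℤ} w_ℓ(μ) |
  ≤ C √μ ln μ`,
where `w_ℓ(μ) = ∫_{α²}^{∞} max(μ − (ℓ+ξ)² e^{2t}/L², 0)^{1/2} dt` and
`T_{μ,L} = ln(L√μ / min(ξ, 1−ξ))`. -/

theorem sum_vs_double_integral
    (α L ξ : ℝ) (hα : 0 < α) (hL : 0 < L) (hξ : ξ ∈ Set.Ioo (0 : ℝ) 1) :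
    ∃ C : ℝ, 1 < C ∧ ∃ μ₀ : ℝ, 0 < μ₀ ∧ ∀ μ : ℝ, μ₀ ≤ μ →
      |(∫ t in (α ^ 2)..(Real.log (L * Real.sqrt μ / min ξ (1 - ξ))),
            ∫ x : ℝ, Real.sqrt (max (μ - (x + ξ) ^ 2 * Real.exp (2 * t) / L ^ 2) 0)) -
          ∑' ℓ : ℤ,
            ∫ t in Set.Ioi (α ^ 2),
              Real.sqrt (max (μ - ((ℓ : ℝ) + ξ) ^ 2 * Real.exp (2 * t) / L ^ 2) 0)| ≤
        C * Real.sqrt μ * Real.log μ := by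
  obtain ⟨hξ0, hξ1⟩ := hξ
  set m : ℝ := min ξ (1 - ξ) with hmdef
  have hm : 0 < m := lt_min hξ0 (by linarith)
  have hm1 : m ≤ ξ := min_le_left _ _
  have hm2 : m ≤ 1 - ξ := min_le_right _ _
  refine ⟨3, by norm_num, max 1 (Real.exp (2*(α^2 + |Real.log L| + |Real.log m| + 1))),
    lt_max_of_lt_left one_pos, fun μ hμ => ?_⟩
  have hμ1 : (1:ℝ) ≤ μ := le_trans (le_max_left _ _) hμ
  have hμ0 : (0:ℝ) < μ := by linarith
  have hsqμ : 0 < Real.sqrt μ := Real.sqrt_pos.2 hμ0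
  have hlog : 2*(α^2 + |Real.log L| + |Real.log m| + 1) ≤ Real.log μ := by
    rw [Real.le_log_iff_exp_le hμ0]
    exact le_trans (le_max_right _ _) hμ
  have hlogμ0 : (0:ℝ) ≤ Real.log μ := Real.log_nonneg hμ1
  set T : ℝ := Real.log (L * Real.sqrt μ / m) with hTdef
  have hT : T = Real.log L + Real.log μ / 2 - Real.log m := by
    rw [hTdef, Real.log_div (by positivity) (ne_of_gt hm),
      Real.log_mul (ne_of_gt hL) (ne_of_gt hsqμ), Real.log_sqrt hμ0.le]
  have habsL := le_abs_self (Real.log L)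
  have habsL' := neg_abs_le (Real.log L)
  have habsm := le_abs_self (Real.log m)
  have habsm' := neg_abs_le (Real.log m)
  have hα2 : (0:ℝ) < α^2 := by positivity
  have hαT : α^2 ≤ T := by rw [hT]; nlinarith
  have hTlog : T - α^2 ≤ Real.log μ := by rw [hT]; nlinarith
  set K : ℤ := ⌈L * Real.sqrt μ⌉ + 2 with hKdef
  have hceil : L * Real.sqrt μ ≤ (⌈L * Real.sqrt μ⌉ : ℝ) := Int.le_ceil _
  have hceil0 : (0:ℤ) ≤ ⌈L * Real.sqrt μ⌉ := Int.ceil_nonneg (by positivity)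
  have hKR : L * Real.sqrt μ + 2 ≤ (K:ℝ) := by
    rw [hKdef]; push_cast; linarith
  -- the integrand in t for each ℓ
  set f : ℤ → ℝ → ℝ :=
    fun ℓ t => Real.sqrt (max (μ - ((ℓ:ℝ) + ξ)^2 * Real.exp (2*t) / L^2) 0) with hfdef
  have hfcont : ∀ ℓ : ℤ, Continuous (f ℓ) := by intro ℓ; fun_prop
  have hfnn : ∀ (ℓ : ℤ) (t : ℝ), 0 ≤ f ℓ t := fun ℓ t => Real.sqrt_nonneg _
  -- vanishing of f for t ≥ T
  have hexpT : Real.exp T = L * Real.sqrt μ / m := Real.exp_log (by positivity)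
  have hvanT : ∀ (ℓ : ℤ) (t : ℝ), T ≤ t → f ℓ t = 0 := by
    intro ℓ t htT
    have h1 : m^2 ≤ ((ℓ:ℝ) + ξ)^2 := by
      rcases le_or_gt 0 ℓ with h | h
      · have : (0:ℝ) ≤ (ℓ:ℝ) := by exact_mod_cast h
        nlinarith
      · have h' : ℓ ≤ -1 := by omega
        have : (ℓ:ℝ) ≤ -1 := by exact_mod_cast h'
        nlinarith
    have h2 : Real.exp (2*T) ≤ Real.exp (2*t) := Real.exp_le_exp.2 (by linarith)
    have h3 : Real.exp (2*T) = (L * Real.sqrt μ / m)^2 := by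
      rw [show (2:ℝ)*T = T + T by ring, Real.exp_add, hexpT]; ring
    have h4 : μ * L^2 ≤ ((ℓ:ℝ) + ξ)^2 * Real.exp (2*t) := by
      have h5 : m^2 * ((L * Real.sqrt μ / m)^2) ≤ ((ℓ:ℝ) + ξ)^2 * Real.exp (2*t) := by
        apply mul_le_mul h1 (h3 ▸ h2) (by positivity) (sq_nonneg _)
      have h6 : m^2 * ((L * Real.sqrt μ / m)^2) = μ * L^2 := by
        rw [← mul_pow, mul_div_cancel₀ _ (ne_of_gt hm), mul_pow, Real.sq_sqrt hμ0.le]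
        ring
      rw [h6] at h5
      exact h5
    have h7 : μ - ((ℓ:ℝ) + ξ)^2 * Real.exp (2*t) / L^2 ≤ 0 := by
      rw [sub_nonpos, le_div_iff₀ (by positivity)]
      linarith
    simp only [hfdef]
    rw [max_eq_right h7, Real.sqrt_zero]
  -- vanishing of f for ℓ outside Icc (-K) K and t ≥ 0
  have hvanK : ∀ (ℓ : ℤ), ℓ ∉ Finset.Icc (-K) K → ∀ t : ℝ, 0 ≤ t → f ℓ t = 0 := by
    intro ℓ hℓ t ht
    have hexp1 : (1:ℝ) ≤ Real.exp (2*t) := by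
      rw [← Real.exp_zero]; exact Real.exp_le_exp.2 (by linarith)
    simp only [Finset.mem_Icc, not_and_or, not_le] at hℓ
    have h1 : L^2 * μ ≤ ((ℓ:ℝ) + ξ)^2 := by
      rcases hℓ with h | h
      · have : (ℓ:ℝ) ≤ -(K:ℝ) - 1 := by exact_mod_cast (by omega : ℓ ≤ -K - 1)
        have h2 : (ℓ:ℝ) + ξ ≤ -(L * Real.sqrt μ) := by linarith
        nlinarith [Real.sq_sqrt hμ0.le, mul_pos hL hsqμ]
      · have : (K:ℝ) + 1 ≤ (ℓ:ℝ) := by exact_mod_cast (by omega : K + 1 ≤ ℓ)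
        have h2 : L * Real.sqrt μ ≤ (ℓ:ℝ) + ξ := by linarith
        nlinarith [Real.sq_sqrt hμ0.le, mul_pos hL hsqμ]
    have h4 : μ * L^2 ≤ ((ℓ:ℝ) + ξ)^2 * Real.exp (2*t) := by
      nlinarith [sq_nonneg ((ℓ:ℝ)+ξ)]
    have h7 : μ - ((ℓ:ℝ) + ξ)^2 * Real.exp (2*t) / L^2 ≤ 0 := by
      rw [sub_nonpos, le_div_iff₀ (by positivity)]
      linarith
    simp only [hfdef]
    rw [max_eq_right h7, Real.sqrt_zero]
  -- Step A: tsum equals finite sum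
  have hstepA : (∑' ℓ : ℤ, ∫ t in Set.Ioi (α^2), f ℓ t)
      = ∑ ℓ ∈ Finset.Icc (-K) K, ∫ t in Set.Ioi (α^2), f ℓ t := by
    apply tsum_eq_sum
    intro ℓ hℓ
    have : ∀ t ∈ Set.Ioi (α^2), f ℓ t = 0 := fun t ht =>
      hvanK ℓ hℓ t (le_of_lt (lt_of_le_of_lt hα2.le ht))
    rw [MeasureTheory.setIntegral_congr_fun measurableSet_Ioi this]
    simp
  -- Step B: each w_ℓ as interval integral
  have hstepB : ∀ ℓ : ℤ, (∫ t in Set.Ioi (α^2), f ℓ t) = ∫ t in (α^2)..T, f ℓ t := by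
    intro ℓ
    have hcong : ∀ t ∈ Set.Ioi (α^2), f ℓ t = (Set.Ioc (α^2) T).indicator (f ℓ) t := by
      intro t ht
      by_cases htT : t ≤ T
      · rw [Set.indicator_of_mem (Set.mem_Ioc.2 ⟨ht, htT⟩)]
      · rw [Set.indicator_of_notMem (by simp [Set.mem_Ioc]; intro; linarith)]
        exact hvanT ℓ t (by linarith)
    rw [MeasureTheory.setIntegral_congr_fun measurableSet_Ioi hcong,
      MeasureTheory.setIntegral_indicator measurableSet_Ioc,
      Set.inter_eq_self_of_subset_right Set.Ioc_subset_Ioi_self,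
      intervalIntegral.integral_of_le hαT]
  -- Step C: swap finite sum and interval integral
  have hstepC : (∑ ℓ ∈ Finset.Icc (-K) K, ∫ t in (α^2)..T, f ℓ t)
      = ∫ t in (α^2)..T, ∑ ℓ ∈ Finset.Icc (-K) K, f ℓ t := by
    rw [intervalIntegral.integral_finset_sum]
    intro ℓ _
    exact (hfcont ℓ).intervalIntegrable _ _
  -- assemble
  have hrw : (∑' ℓ : ℤ, ∫ t in Set.Ioi (α^2), f ℓ t)
      = ∫ t in (α^2)..T, ∑ ℓ ∈ Finset.Icc (-K) K, f ℓ t := by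
    rw [hstepA, ← hstepC]
    exact Finset.sum_congr rfl fun ℓ _ => hstepB ℓ
  rw [hrw]
  have hFr : (∫ t in (α^2)..T,
        ∫ x : ℝ, Real.sqrt (max (μ - (x + ξ)^2 * Real.exp (2*t) / L^2) 0))
      = ∫ t in (α^2)..T, π/2 * μ * L * Real.exp (-t) := by
    apply intervalIntegral.integral_congr
    intro t _
    exact hF_eq μ L ξ hμ0 hL t
  rw [hFr]
  set S : ℝ → ℝ := fun t => ∑ ℓ ∈ Finset.Icc (-K) K, f ℓ t with hSdef
  have hScont : Continuous S := continuous_finset_sum _ (fun ℓ _ => hfcont ℓ)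
  have hFcont : Continuous (fun t : ℝ => π/2 * μ * L * Real.exp (-t)) := by fun_prop
  rw [← intervalIntegral.integral_sub (hFcont.intervalIntegrable _ _)
    (hScont.intervalIntegrable _ _)]
  have hptw : ∀ t ∈ Set.Icc (α^2) T,
      |π/2 * μ * L * Real.exp (-t) - S t| ≤ 2 * Real.sqrt μ := by
    intro t ht
    have := pointwise_bound μ L ξ hμ1 hL hξ0 hξ1 t (le_trans hα2.le ht.1)
    simpa only [hSdef, hfdef, hKdef] using this
  calc |∫ t in (α^2)..T, (π/2 * μ * L * Real.exp (-t) - S t)|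
      ≤ ∫ t in (α^2)..T, |π/2 * μ * L * Real.exp (-t) - S t| :=
        intervalIntegral.abs_integral_le_integral_abs hαT
    _ ≤ ∫ _t in (α^2)..T, 2 * Real.sqrt μ := by
        apply intervalIntegral.integral_mono_on hαT
          ((hFcont.sub hScont).abs.intervalIntegrable _ _) intervalIntegrable_const
        exact hptw
    _ = (T - α^2) * (2 * Real.sqrt μ) := by
        rw [intervalIntegral.integral_const, smul_eq_mul]
    _ ≤ 3 * Real.sqrt μ * Real.log μ := by nlinarith
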